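/- Let f be a ρ-symmetric bounded affine permutation of type (n,2n) and i ∈ ℤ. Then f⋊s_i satisfies j ≤ (f⋊s_i)(j) ≤ j+2n for all j ∈ ℤ (equivalently, f⋊s_i is again a bounded affine permutation of type (n,2n)) if and only if f(i) ≠ i and f(i+1) ≠ i+1+2n. -/

import Mathlib

/-- The affine simple reflection `s_i` of period `2n`: `j ↦ j+1` if `j ≡ i (mod 2n)`,
`j ↦ j−1` if `j ≡ i+1 (mod 2n)`, and `j ↦ j` otherwise. -/
def sRefl (n : ℕ) (i : ℤ) : ℤ → ℤ := fun j =>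
  if (j - i) % (2 * (n : ℤ)) = 0 then j + 1
  else if (j - (i + 1)) % (2 * (n : ℤ)) = 0 then j - 1
  else j

open Classical in
/-- The semidirect product `f ⋊ s_i`: equal to `s_{i+n} ∘ f ∘ s_i` if
`s_{i+n} ∘ f ≠ f ∘ s_i`, and to `f ∘ s_i` otherwise. -/
noncomputable def semidirect (n : ℕ) (i : ℤ) (f : ℤ → ℤ) : ℤ → ℤ :=
  if sRefl n (i + (n : ℤ)) ∘ f = f ∘ sRefl n i then f ∘ sRefl n i
  else sRefl n (i + (n : ℤ)) ∘ f ∘ sRefl n i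

lemma emod_eq_zero_small (m x : ℤ) (hm : 0 < m) (h : m ∣ x) (hlo : -m < x) (hhi : x < m) :
    x = 0 := by
  rcases h with ⟨q, rfl⟩
  rcases lt_trichotomy q 0 with h | h | h
  · nlinarith
  · simp [h]
  · nlinarith

lemma f_shift (n : ℕ) (f : ℤ → ℤ) (hper : ∀ j : ℤ, f (j + 2 * (n : ℤ)) = f j + 2 * (n : ℤ)) :
    ∀ (k j : ℤ), f (j + 2 * (n : ℤ) * k) = f j + 2 * (n : ℤ) * k := by
  have hper' : ∀ x : ℤ, f (x - 2 * (n : ℤ)) = f x - 2 * (n : ℤ) := by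
    intro x
    have := hper (x - 2 * (n : ℤ))
    rw [show x - 2 * (n : ℤ) + 2 * (n : ℤ) = x from by ring] at this
    omega
  intro k
  induction k using Int.induction_on with
  | zero => simp
  | succ m ih =>
      intro j
      rw [show j + 2 * (n : ℤ) * ((m : ℤ) + 1) = (j + 2 * (n : ℤ) * m) + 2 * (n : ℤ) from by ring,
        hper, ih]
      ring
  | pred m ih =>
      intro j
      rw [show j + 2 * (n : ℤ) * (-(m : ℤ) - 1) = (j + 2 * (n : ℤ) * (-(m : ℤ))) - 2 * (n : ℤ) from by ring,
        hper', ih]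
      ring

lemma sRefl_shift (n : ℕ) (m x k : ℤ) :
    sRefl n m (x + 2 * (n : ℤ) * k) = sRefl n m x + 2 * (n : ℤ) * k := by
  unfold sRefl
  have h1 : (x + 2 * (n : ℤ) * k - m) % (2 * (n : ℤ)) = (x - m) % (2 * (n : ℤ)) := by
    rw [show x + 2 * (n : ℤ) * k - m = (x - m) + 2 * (n : ℤ) * k from by ring]
    apply Int.add_mul_emod_self_left
  have h2 : (x + 2 * (n : ℤ) * k - (m + 1)) % (2 * (n : ℤ)) = (x - (m + 1)) % (2 * (n : ℤ)) := by
    rw [show x + 2 * (n : ℤ) * k - (m + 1) = (x - (m + 1)) + 2 * (n : ℤ) * k from by ring]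
    apply Int.add_mul_emod_self_left
  rw [h1, h2]
  split
  · ring
  · split
    · ring
    · rfl

theorem stmt8 (n : ℕ) (f : ℤ → ℤ)
    (hbij : Function.Bijective f)
    (hper : ∀ j : ℤ, f (j + 2 * (n : ℤ)) = f j + 2 * (n : ℤ))
    (hbound : ∀ j : ℤ, j ≤ f j ∧ f j ≤ j + 2 * (n : ℤ))
    (hsum : ∑ j ∈ Finset.Icc (1 : ℤ) (2 * (n : ℤ)), (f j - j) = 2 * (n : ℤ) ^ 2)
    (hsym : ∀ j : ℤ, f (f j - (n : ℤ)) = j + (n : ℤ))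
    (i : ℤ) :
    (∀ j : ℤ, j ≤ semidirect n i f j ∧ semidirect n i f j ≤ j + 2 * (n : ℤ)) ↔
      (f i ≠ i ∧ f (i + 1) ≠ i + 1 + 2 * (n : ℤ)) := by
  rcases Nat.eq_zero_or_pos n with hn0 | hn
  · -- n = 0 : both sides are false
    subst hn0
    have hid : ∀ j : ℤ, f j = j := by
      intro j
      have h1 := (hbound j).1
      have h2 := (hbound j).2
      push_cast at h2
      omega
    have hfeq : f = id := funext fun j => hid j
    constructor
    · intro h
      exfalso
      have hcond : sRefl 0 (i + ((0 : ℕ) : ℤ)) ∘ f = f ∘ sRefl 0 i := by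
        rw [hfeq]
        funext x
        simp only [Function.comp_apply, id_eq]
        norm_num
      have hsd : semidirect 0 i f = f ∘ sRefl 0 i := by
        unfold semidirect
        rw [if_pos hcond]
      have hv : sRefl 0 i (i + 1) = i := by
        unfold sRefl
        norm_num
      have := (h (i + 1)).1
      rw [hsd] at this
      simp only [Function.comp_apply, hv, hid] at this
      omega
    · rintro ⟨h1, -⟩
      exact absurd (hid i) h1
  · -- n ≥ 1
    have hn1 : (1 : ℤ) ≤ (n : ℤ) := by exact_mod_cast hn
    have fsh := f_shift n f hper
    constructor
    · -- forward direction
      intro h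
      constructor
      · -- f i ≠ i
        intro hfi
        have hs : sRefl n i (i + 1) = i := by
          have c1 : (i + 1 - i) % (2 * (n : ℤ)) ≠ 0 := by
            intro hc
            have := emod_eq_zero_small (2 * (n : ℤ)) (i + 1 - i) (by omega)
              (Int.dvd_of_emod_eq_zero hc) (by omega) (by omega)
            omega
          have c2 : (i + 1 - (i + 1)) % (2 * (n : ℤ)) = 0 := by simp
          unfold sRefl
          rw [if_neg c1, if_pos c2]
          ring
        by_cases hc : sRefl n (i + (n : ℤ)) ∘ f = f ∘ sRefl n i
        · have hsd : semidirect n i f = f ∘ sRefl n i := by unfold semidirect; rw [if_pos hc]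
          have := (h (i + 1)).1
          rw [hsd] at this
          simp only [Function.comp_apply, hs, hfi] at this
          omega
        · have hsd : semidirect n i f = sRefl n (i + (n : ℤ)) ∘ f ∘ sRefl n i := by
            unfold semidirect; rw [if_neg hc]
          have ht : sRefl n (i + (n : ℤ)) i ≤ i := by
            have c1 : (i - (i + (n : ℤ))) % (2 * (n : ℤ)) ≠ 0 := by
              intro hcc
              have := emod_eq_zero_small (2 * (n : ℤ)) (i - (i + (n : ℤ))) (by omega)
                (Int.dvd_of_emod_eq_zero hcc) (by omega) (by omega)
              omega
            unfold sRefl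
            rw [if_neg c1]
            split
            · omega
            · omega
          have := (h (i + 1)).1
          rw [hsd] at this
          simp only [Function.comp_apply, hs, hfi] at this
          omega
      · -- f (i+1) ≠ i+1+2n
        intro hfi1
        have hs : sRefl n i i = i + 1 := by
          unfold sRefl
          rw [if_pos (by simp)]
        by_cases hc : sRefl n (i + (n : ℤ)) ∘ f = f ∘ sRefl n i
        · have hsd : semidirect n i f = f ∘ sRefl n i := by unfold semidirect; rw [if_pos hc]
          have := (h i).2
          rw [hsd] at this
          simp only [Function.comp_apply, hs, hfi1] at this
          omega
        · have hsd : semidirect n i f = sRefl n (i + (n : ℤ)) ∘ f ∘ sRefl n i := by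
            unfold semidirect; rw [if_neg hc]
          have ht : i + 1 + 2 * (n : ℤ) ≤ sRefl n (i + (n : ℤ)) (i + 1 + 2 * (n : ℤ)) := by
            have c2 : (i + 1 + 2 * (n : ℤ) - (i + (n : ℤ) + 1)) % (2 * (n : ℤ)) ≠ 0 := by
              intro hcc
              have := emod_eq_zero_small (2 * (n : ℤ)) (i + 1 + 2 * (n : ℤ) - (i + (n : ℤ) + 1))
                (by omega) (Int.dvd_of_emod_eq_zero hcc) (by omega) (by omega)
              omega
            unfold sRefl
            by_cases c1 : (i + 1 + 2 * (n : ℤ) - (i + (n : ℤ))) % (2 * (n : ℤ)) = 0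
            · rw [if_pos c1]; omega
            · rw [if_neg c1, if_neg c2]
          have := (h i).2
          rw [hsd] at this
          simp only [Function.comp_apply, hs, hfi1] at this
          omega
    · -- backward direction
      rintro ⟨ha, hb⟩
      have ha1 : i + 1 ≤ f i := by have := (hbound i).1; omega
      have ha2 : f i ≤ i + 2 * (n : ℤ) := (hbound i).2
      have hb1 : i + 1 ≤ f (i + 1) := (hbound (i + 1)).1
      have hb2 : f (i + 1) ≤ i + 2 * (n : ℤ) := by have := (hbound (i + 1)).2; omega
      -- values of sRefl n i
      have claimA : ∀ j : ℤ, j ≤ f (sRefl n i j) ∧ f (sRefl n i j) ≤ j + 2 * (n : ℤ) := by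
        intro j
        by_cases h1 : (j - i) % (2 * (n : ℤ)) = 0
        · obtain ⟨k, hk⟩ := Int.dvd_of_emod_eq_zero h1
          have hs : sRefl n i j = j + 1 := by unfold sRefl; rw [if_pos h1]
          have hfv : f (j + 1) = f (i + 1) + 2 * (n : ℤ) * k := by
            rw [show j + 1 = (i + 1) + 2 * (n : ℤ) * k from by linarith]
            exact fsh k (i + 1)
          rw [hs, hfv]
          constructor <;> linarith
        · by_cases h2 : (j - (i + 1)) % (2 * (n : ℤ)) = 0
          · obtain ⟨k, hk⟩ := Int.dvd_of_emod_eq_zero h2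
            have hs : sRefl n i j = j - 1 := by unfold sRefl; rw [if_neg h1, if_pos h2]
            have hfv : f (j - 1) = f i + 2 * (n : ℤ) * k := by
              rw [show j - 1 = i + 2 * (n : ℤ) * k from by linarith]
              exact fsh k i
            rw [hs, hfv]
            constructor <;> linarith
          · have hs : sRefl n i j = j := by unfold sRefl; rw [if_neg h1, if_neg h2]
            rw [hs]; exact hbound j
      have claimB : ∀ j : ℤ, j ≤ sRefl n (i + (n : ℤ)) (f (sRefl n i j)) ∧
          sRefl n (i + (n : ℤ)) (f (sRefl n i j)) ≤ j + 2 * (n : ℤ) := by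
        intro j
        by_cases h1 : (j - i) % (2 * (n : ℤ)) = 0
        · obtain ⟨k, hk⟩ := Int.dvd_of_emod_eq_zero h1
          have hs : sRefl n i j = j + 1 := by unfold sRefl; rw [if_pos h1]
          have hfv : f (j + 1) = f (i + 1) + 2 * (n : ℤ) * k := by
            rw [show j + 1 = (i + 1) + 2 * (n : ℤ) * k from by linarith]
            exact fsh k (i + 1)
          rw [hs, hfv, sRefl_shift n (i + (n : ℤ)) (f (i + 1)) k]
          have key : i ≤ sRefl n (i + (n : ℤ)) (f (i + 1)) ∧
              sRefl n (i + (n : ℤ)) (f (i + 1)) ≤ i + 2 * (n : ℤ) := by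
            by_cases c1 : (f (i + 1) - (i + (n : ℤ))) % (2 * (n : ℤ)) = 0
            · have he := emod_eq_zero_small (2 * (n : ℤ)) (f (i + 1) - (i + (n : ℤ)))
                (by omega) (Int.dvd_of_emod_eq_zero c1) (by omega) (by omega)
              have hv : sRefl n (i + (n : ℤ)) (f (i + 1)) = f (i + 1) + 1 := by
                unfold sRefl; rw [if_pos c1]
              rw [hv]; omega
            · by_cases c2 : (f (i + 1) - (i + (n : ℤ) + 1)) % (2 * (n : ℤ)) = 0
              · have he := emod_eq_zero_small (2 * (n : ℤ)) (f (i + 1) - (i + (n : ℤ) + 1))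
                  (by omega) (Int.dvd_of_emod_eq_zero c2) (by omega) (by omega)
                have hv : sRefl n (i + (n : ℤ)) (f (i + 1)) = f (i + 1) - 1 := by
                  unfold sRefl; rw [if_neg c1, if_pos c2]
                rw [hv]; omega
              · have hv : sRefl n (i + (n : ℤ)) (f (i + 1)) = f (i + 1) := by
                  unfold sRefl; rw [if_neg c1, if_neg c2]
                rw [hv]; omega
          constructor <;> linarith [key.1, key.2]
        · by_cases h2 : (j - (i + 1)) % (2 * (n : ℤ)) = 0
          · obtain ⟨k, hk⟩ := Int.dvd_of_emod_eq_zero h2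
            have hs : sRefl n i j = j - 1 := by unfold sRefl; rw [if_neg h1, if_pos h2]
            have hfv : f (j - 1) = f i + 2 * (n : ℤ) * k := by
              rw [show j - 1 = i + 2 * (n : ℤ) * k from by linarith]
              exact fsh k i
            rw [hs, hfv, sRefl_shift n (i + (n : ℤ)) (f i) k]
            have key : i + 1 ≤ sRefl n (i + (n : ℤ)) (f i) ∧
                sRefl n (i + (n : ℤ)) (f i) ≤ i + 1 + 2 * (n : ℤ) := by
              by_cases c1 : (f i - (i + (n : ℤ))) % (2 * (n : ℤ)) = 0
              · have he := emod_eq_zero_small (2 * (n : ℤ)) (f i - (i + (n : ℤ)))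
                  (by omega) (Int.dvd_of_emod_eq_zero c1) (by omega) (by omega)
                have hv : sRefl n (i + (n : ℤ)) (f i) = f i + 1 := by
                  unfold sRefl; rw [if_pos c1]
                rw [hv]; omega
              · by_cases c2 : (f i - (i + (n : ℤ) + 1)) % (2 * (n : ℤ)) = 0
                · have he := emod_eq_zero_small (2 * (n : ℤ)) (f i - (i + (n : ℤ) + 1))
                    (by omega) (Int.dvd_of_emod_eq_zero c2) (by omega) (by omega)
                  have hv : sRefl n (i + (n : ℤ)) (f i) = f i - 1 := by
                    unfold sRefl; rw [if_neg c1, if_pos c2]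
                  rw [hv]; omega
                · have hv : sRefl n (i + (n : ℤ)) (f i) = f i := by
                    unfold sRefl; rw [if_neg c1, if_neg c2]
                  rw [hv]; omega
            constructor <;> linarith [key.1, key.2]
          · have hs : sRefl n i j = j := by unfold sRefl; rw [if_neg h1, if_neg h2]
            rw [hs]
            by_cases c1 : (f j - (i + (n : ℤ))) % (2 * (n : ℤ)) = 0
            · obtain ⟨q, hq⟩ := Int.dvd_of_emod_eq_zero c1
              have hv : sRefl n (i + (n : ℤ)) (f j) = f j + 1 := by
                unfold sRefl; rw [if_pos c1]
              have e2 := hsym j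
              have e3 : f j - (n : ℤ) = i + 2 * (n : ℤ) * q := by linarith
              rw [e3, fsh q i] at e2
              rw [hv]
              constructor
              · linarith [(hbound j).1]
              · linarith
            · by_cases c2 : (f j - (i + (n : ℤ) + 1)) % (2 * (n : ℤ)) = 0
              · obtain ⟨q, hq⟩ := Int.dvd_of_emod_eq_zero c2
                have hv : sRefl n (i + (n : ℤ)) (f j) = f j - 1 := by
                  unfold sRefl; rw [if_neg c1, if_pos c2]
                have e2 := hsym j
                have e3 : f j - (n : ℤ) = (i + 1) + 2 * (n : ℤ) * q := by linarith
                rw [e3, fsh q (i + 1)] at e2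
                rw [hv]
                constructor
                · linarith
                · linarith [(hbound j).2]
              · have hv : sRefl n (i + (n : ℤ)) (f j) = f j := by
                  unfold sRefl; rw [if_neg c1, if_neg c2]
                rw [hv]; exact hbound j
      intro j
      by_cases hc : sRefl n (i + (n : ℤ)) ∘ f = f ∘ sRefl n i
      · have hsd : semidirect n i f = f ∘ sRefl n i := by unfold semidirect; rw [if_pos hc]
        rw [hsd]
        exact claimA j
      · have hsd : semidirect n i f = sRefl n (i + (n : ℤ)) ∘ f ∘ sRefl n i := by
          unfold semidirect; rw [if_neg hc]
        rw [hsd]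
        exact claimB j
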